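/- (False positive of the GBLP distinguishability test) Consider the qubit map with T = 0 and translation c = (0,0,c₃), |c₃| ≤ 1, which sends every Bloch vector to c. For any Bloch vectors r₁, r₂ with ‖r₁‖ ≤ 1, ‖r₂‖ ≤ 1, the evolved Bloch vectors are equal (both equal c), yet for every p ∈ [0,1] with p ≠ 1/2 and q = 1-p, the generalized trace distance of the outputs is max(‖p c - q c‖, |p-q|) = |p-q| > 0. -/

import Mathlib

noncomputable section

/-- The action of a qubit dynamical map, given by a real 3×3 matrix,
on Bloch vectors in ℝ³. -/
def act (T : Matrix (Fin 3) (Fin 3) ℝ) (r : EuclideanSpace ℝ (Fin 3)) :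
    EuclideanSpace ℝ (Fin 3) :=
  WithLp.toLp 2 (T.mulVec r)

/-- (False positive of the GBLP distinguishability test.) For the qubit map with T = 0
and translation c = (0,0,c₃), |c₃| ≤ 1, every Bloch vector is sent to c, so the evolved
states of any r₁, r₂ coincide; yet for every p ∈ [0,1] with p ≠ 1/2 and q = 1-p, the
generalized trace distance of the outputs is max(‖p c - q c‖, |p-q|) = |p-q| > 0. -/
theorem gblp_false_positive (c₃ : ℝ) (hc : |c₃| ≤ 1)
    (r₁ r₂ : EuclideanSpace ℝ (Fin 3)) (h₁ : ‖r₁‖ ≤ 1) (h₂ : ‖r₂‖ ≤ 1) :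
    let c : EuclideanSpace ℝ (Fin 3) := WithLp.toLp 2 ![0, 0, c₃]
    (act (0 : Matrix (Fin 3) (Fin 3) ℝ) r₁ + c = c)
    ∧ (act (0 : Matrix (Fin 3) (Fin 3) ℝ) r₂ + c = c)
    ∧ ∀ p : ℝ, p ∈ Set.Icc (0 : ℝ) 1 → p ≠ 1 / 2 → ∀ q : ℝ, q = 1 - p →
        max ‖p • c - q • c‖ |p - q| = |p - q| ∧ 0 < |p - q| := by
  intro c
  have hact : ∀ r : EuclideanSpace ℝ (Fin 3),
      act (0 : Matrix (Fin 3) (Fin 3) ℝ) r + c = c := by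
    intro r
    have : act (0 : Matrix (Fin 3) (Fin 3) ℝ) r = 0 := by
      simp [act, Matrix.zero_mulVec]
    rw [this, zero_add]
  refine ⟨hact r₁, hact r₂, ?_⟩
  intro p hp hne q hq
  have hnorm : ‖c‖ = |c₃| := by
    rw [EuclideanSpace.norm_eq]
    rw [Fin.sum_univ_three]
    show √(‖c 0‖ ^ 2 + ‖c 1‖ ^ 2 + ‖c 2‖ ^ 2) = |c₃|
    simp only [c, Matrix.cons_val_zero, Matrix.cons_val_one, Matrix.head_cons,
      Matrix.cons_val_two, Matrix.tail_cons, Real.norm_eq_abs]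
    rw [abs_zero, sq_abs, show (0:ℝ)^2 + 0^2 + c₃^2 = c₃^2 by ring, Real.sqrt_sq_eq_abs]
  have key : ‖p • c - q • c‖ = |p - q| * ‖c‖ := by
    rw [← sub_smul, norm_smul, Real.norm_eq_abs]
  have hle : ‖p • c - q • c‖ ≤ |p - q| := by
    rw [key, hnorm]
    calc |p - q| * |c₃| ≤ |p - q| * 1 := by
          exact mul_le_mul_of_nonneg_left hc (abs_nonneg _)
      _ = |p - q| := mul_one _
  have hpos : 0 < |p - q| := by
    rw [abs_pos, hq]
    intro h; apply hne; linarith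
  exact ⟨max_eq_right hle, hpos⟩
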